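/- Let 𝔖 = {(1,0), (-1,0), (0,2), (0,-1)} and set b = x + x⁻¹. Let Y(t) be the unique formal power series in t with zero constant term satisfying Y(t) = t(Y(t)³ + b·Y(t) + 1), with coefficients in ℂ[x, x⁻¹]. Then the generating function for bilateral walks (paths with steps in 𝔖 ending on the x-axis, weighted by x^(ending abscissa) t^(length)) is S_x(x;t) = 1/(1 - tb - 3tY(t)²). -/

import Mathlib

open PowerSeries

noncomputable section

/-- The step set `𝔖 = {(1,0), (-1,0), (0,2), (0,-1)}`. -/
def stepSet : Finset (ℤ × ℤ) := {(1, 0), (-1, 0), (0, 2), (0, -1)}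

/-- The generating function `S_x(x;t)` of bilateral walks: paths with steps in
`𝔖` ending on the `x`-axis, a walk of length `n` ending at `(i,0)` being
weighted `x^i t^n`.  Coefficients lie in `ℂ[x,x⁻¹]` (Laurent polynomials). -/
def Sx : PowerSeries (LaurentPolynomial ℂ) :=
  PowerSeries.mk fun n =>
    ∑ w : Fin n → {s // s ∈ stepSet},
      if (∑ i, (w i : ℤ × ℤ).2) = 0 then LaurentPolynomial.T (∑ i, (w i : ℤ × ℤ).1) else 0

namespace BWaux

open LaurentPolynomial

variable {A : Type*} [CommRing A]

/-- Core support lemma for products of Laurent polynomials. -/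
lemma lp_mul_apply_eq_zero {p q : LaurentPolynomial A} {m : ℤ}
    (h : ∀ i ∈ p.coeff.support, ∀ j ∈ q.coeff.support, i + j ≠ m) : (p * q).coeff m = 0 := by
  by_contra hc
  obtain ⟨i, hi, j, hj, hij⟩ :=
    Finset.mem_add.mp (AddMonoidAlgebra.support_coeff_mul_subset p q (Finsupp.mem_support_iff.mpr hc))
  exact h i hi j hj hij

/-- `UB a u` : every coefficient of `u` is supported on exponents `≤ a`. -/
def UB (a : ℤ) (u : PowerSeries (LaurentPolynomial A)) : Prop :=
  ∀ (n : ℕ) (m : ℤ), a < m → (PowerSeries.coeff n u).coeff m = 0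

/-- `LB a u` : every coefficient of `u` is supported on exponents `≥ a`. -/
def LB (a : ℤ) (u : PowerSeries (LaurentPolynomial A)) : Prop :=
  ∀ (n : ℕ) (m : ℤ), m < a → (PowerSeries.coeff n u).coeff m = 0

lemma UB.mul {a b : ℤ} {u v : PowerSeries (LaurentPolynomial A)}
    (hu : UB a u) (hv : UB b v) : UB (a + b) (u * v) := by
  intro n m hm
  rw [PowerSeries.coeff_mul, AddMonoidAlgebra.coeff_sum, Finsupp.finset_sum_apply]
  refine Finset.sum_eq_zero fun p _ => ?_
  refine lp_mul_apply_eq_zero fun i hi j hj => ?_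
  have h1 : ¬ a < i := fun h => Finsupp.mem_support_iff.mp hi (hu _ _ h)
  have h2 : ¬ b < j := fun h => Finsupp.mem_support_iff.mp hj (hv _ _ h)
  omega

lemma LB.mul {a b : ℤ} {u v : PowerSeries (LaurentPolynomial A)}
    (hu : LB a u) (hv : LB b v) : LB (a + b) (u * v) := by
  intro n m hm
  rw [PowerSeries.coeff_mul, AddMonoidAlgebra.coeff_sum, Finsupp.finset_sum_apply]
  refine Finset.sum_eq_zero fun p _ => ?_
  refine lp_mul_apply_eq_zero fun i hi j hj => ?_
  have h1 : ¬ i < a := fun h => Finsupp.mem_support_iff.mp hi (hu _ _ h)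
  have h2 : ¬ j < b := fun h => Finsupp.mem_support_iff.mp hj (hv _ _ h)
  omega

lemma UB.add {a : ℤ} {u v : PowerSeries (LaurentPolynomial A)}
    (hu : UB a u) (hv : UB a v) : UB a (u + v) := by
  intro n m hm
  rw [map_add, AddMonoidAlgebra.coeff_add, Finsupp.add_apply, hu n m hm, hv n m hm, add_zero]

lemma LB.add {a : ℤ} {u v : PowerSeries (LaurentPolynomial A)}
    (hu : LB a u) (hv : LB a v) : LB a (u + v) := by
  intro n m hm
  rw [map_add, AddMonoidAlgebra.coeff_add, Finsupp.add_apply, hu n m hm, hv n m hm, add_zero]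

lemma UB.mono {a b : ℤ} {u : PowerSeries (LaurentPolynomial A)}
    (hu : UB a u) (hab : a ≤ b) : UB b u := fun n m hm => hu n m (by omega)

lemma LB.anti {a b : ℤ} {u : PowerSeries (LaurentPolynomial A)}
    (hu : LB a u) (hab : b ≤ a) : LB b u := fun n m hm => hu n m (by omega)

lemma UB_iota (s : PowerSeries A) : UB 0 (PowerSeries.map (LaurentPolynomial.C : A →+* _) s) := by
  intro n m hm
  rw [PowerSeries.coeff_map, LaurentPolynomial.C_apply, if_neg (by omega)]

lemma LB_iota (s : PowerSeries A) : LB 0 (PowerSeries.map (LaurentPolynomial.C : A →+* _) s) := by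
  intro n m hm
  rw [PowerSeries.coeff_map, LaurentPolynomial.C_apply, if_neg (by omega)]

lemma UB_yp (k : ℤ) : UB k (PowerSeries.C (R := LaurentPolynomial A) (T k)) := by
  intro n m hm
  rw [PowerSeries.coeff_C]
  split
  · rw [T_apply, if_neg (by omega)]
  · rfl

lemma LB_yp (k : ℤ) : LB k (PowerSeries.C (R := LaurentPolynomial A) (T k)) := by
  intro n m hm
  rw [PowerSeries.coeff_C]
  split
  · rw [T_apply, if_neg (by omega)]
  · rfl

lemma UB_one : UB 0 (1 : PowerSeries (LaurentPolynomial A)) := by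
  simpa using UB_iota (1 : PowerSeries A)

lemma LB_one : LB 0 (1 : PowerSeries (LaurentPolynomial A)) := by
  simpa using LB_iota (1 : PowerSeries A)

lemma UB_rec {W Aa M : PowerSeries (LaurentPolynomial A)}
    (h : W = Aa + M * W) (hM0 : PowerSeries.coeff 0 M = 0)
    (hA : UB 0 Aa) (hM : UB 0 M) : UB 0 W := by
  intro n
  induction n using Nat.strong_induction_on with
  | _ n ih =>
    intro m hm
    rw [h, map_add, AddMonoidAlgebra.coeff_add, Finsupp.add_apply, hA n m hm, PowerSeries.coeff_mul,
      AddMonoidAlgebra.coeff_sum, Finsupp.finset_sum_apply]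
    rw [zero_add]
    refine Finset.sum_eq_zero fun p hp => ?_
    have hpn : p.1 + p.2 = n := Finset.HasAntidiagonal.mem_antidiagonal.mp hp
    rcases Nat.eq_zero_or_pos p.1 with h0 | h0
    · rw [h0, hM0, zero_mul]; rfl
    · refine lp_mul_apply_eq_zero fun i hi j hj => ?_
      have h1 : ¬ (0:ℤ) < i := fun hx => Finsupp.mem_support_iff.mp hi (hM _ _ hx)
      have h2 : ¬ (0:ℤ) < j := fun hx =>
        Finsupp.mem_support_iff.mp hj (ih p.2 (by omega) _ hx)
      omega

lemma LB_rec {W Aa M : PowerSeries (LaurentPolynomial A)}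
    (h : W = Aa + M * W) (hM0 : PowerSeries.coeff 0 M = 0)
    (hA : LB 0 Aa) (hM : LB 0 M) : LB 0 W := by
  intro n
  induction n using Nat.strong_induction_on with
  | _ n ih =>
    intro m hm
    rw [h, map_add, AddMonoidAlgebra.coeff_add, Finsupp.add_apply, hA n m hm, PowerSeries.coeff_mul,
      AddMonoidAlgebra.coeff_sum, Finsupp.finset_sum_apply]
    rw [zero_add]
    refine Finset.sum_eq_zero fun p hp => ?_
    have hpn : p.1 + p.2 = n := Finset.HasAntidiagonal.mem_antidiagonal.mp hp
    rcases Nat.eq_zero_or_pos p.1 with h0 | h0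
    · rw [h0, hM0, zero_mul]; rfl
    · refine lp_mul_apply_eq_zero fun i hi j hj => ?_
      have h1 : ¬ i < (0:ℤ) := fun hx => Finsupp.mem_support_iff.mp hi (hM _ _ hx)
      have h2 : ¬ j < (0:ℤ) := fun hx =>
        Finsupp.mem_support_iff.mp hj (ih p.2 (by omega) _ hx)
      omega

/-- Constant term (in the Laurent variable) extraction. -/
def ct (u : PowerSeries (LaurentPolynomial A)) : PowerSeries A :=
  PowerSeries.mk fun n => (PowerSeries.coeff n u).coeff 0

lemma ct_add (u v : PowerSeries (LaurentPolynomial A)) : ct (u + v) = ct u + ct v := by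
  ext n
  simp only [ct, PowerSeries.coeff_mk, map_add, AddMonoidAlgebra.coeff_add]
  exact Finsupp.add_apply _ _ _

lemma ct_one : ct (1 : PowerSeries (LaurentPolynomial A)) = 1 := by
  ext n
  simp only [ct, PowerSeries.coeff_mk, PowerSeries.coeff_one]
  split
  · rw [← single_zero_one_eq_one, AddMonoidAlgebra.coeff_single, Finsupp.single_apply, if_pos rfl]
  · rfl

lemma ct_iota_mul (s : PowerSeries A) (u : PowerSeries (LaurentPolynomial A)) :
    ct (PowerSeries.map (LaurentPolynomial.C : A →+* _) s * u) = s * ct u := by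
  ext n
  simp only [ct, PowerSeries.coeff_mk, PowerSeries.coeff_mul]
  rw [AddMonoidAlgebra.coeff_sum, Finsupp.finset_sum_apply]
  refine Finset.sum_congr rfl fun p _ => ?_
  rw [PowerSeries.coeff_map, ← single_eq_C, AddMonoidAlgebra.coeff_single_zero_mul]

lemma ct_zero_of_UB (u : PowerSeries (LaurentPolynomial A)) (h : UB (-1) u) : ct u = 0 := by
  ext n
  simp only [ct, PowerSeries.coeff_mk, map_zero]
  exact h n 0 (by norm_num)

lemma ct_zero_of_LB (u : PowerSeries (LaurentPolynomial A)) (h : LB 1 u) : ct u = 0 := by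
  ext n
  simp only [ct, PowerSeries.coeff_mk, map_zero]
  exact h n 0 (by norm_num)

/-- Geometric series relation. -/
lemma geom {B : Type*} [CommRing B] (a : B) :
    (PowerSeries.mk fun n => a ^ n) * (1 - PowerSeries.X * PowerSeries.C (R := B) a) = 1 := by
  have : (PowerSeries.mk fun n => a ^ n) * (PowerSeries.X * PowerSeries.C (R := B) a)
      = ((PowerSeries.mk fun n => a ^ n) * PowerSeries.X) * PowerSeries.C (R := B) a := by ring
  ext n
  rw [mul_sub, mul_one, map_sub, this]
  cases n with
  | zero => simp
  | succ n =>
    rw [PowerSeries.coeff_mul_C, PowerSeries.coeff_succ_mul_X, PowerSeries.coeff_mk,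
      PowerSeries.coeff_mk, PowerSeries.coeff_one]
    simp [pow_succ]

lemma T_prod {ι : Type*} (s : Finset ι) (g : ι → ℤ) :
    (∏ i ∈ s, (T (g i) : LaurentPolynomial A)) = T (∑ i ∈ s, g i) := by
  induction s using Finset.cons_induction with
  | empty => simp
  | cons a s ha ih => rw [Finset.prod_cons, Finset.sum_cons, T_add, ih]

end BWaux

open BWaux LaurentPolynomial

/-- The one-variable-collapsed step polynomial. -/
lemma coeff_Sx (n : ℕ) :
    (PowerSeries.coeff n) Sx =
      (((LaurentPolynomial.C (T 1 + T (-1)) + T 2 + T (-1) : LaurentPolynomial (LaurentPolynomial ℂ))) ^ n).coeff 0 := by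
  have hf : (∑ s : {s // s ∈ stepSet},
      (LaurentPolynomial.C (T (s : ℤ × ℤ).1) * T (s : ℤ × ℤ).2 : LaurentPolynomial (LaurentPolynomial ℂ)))
      = LaurentPolynomial.C (T 1 + T (-1)) + T 2 + T (-1) := by
    rw [Finset.univ_eq_attach, Finset.sum_attach stepSet
      (fun s => (LaurentPolynomial.C (T s.1) * T s.2 : LaurentPolynomial (LaurentPolynomial ℂ)))]
    show ∑ s ∈ ({(1, 0), (-1, 0), (0, 2), (0, -1)} : Finset (ℤ × ℤ)),
      (LaurentPolynomial.C (T s.1) * T s.2 : LaurentPolynomial (LaurentPolynomial ℂ)) = _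
    rw [Finset.sum_insert (by decide), Finset.sum_insert (by decide),
      Finset.sum_insert (by decide), Finset.sum_singleton]
    simp only [T_zero, mul_one, map_add, map_one]
    ring_nf
  rw [← hf]
  have hpow : (∑ s : {s // s ∈ stepSet},
        (LaurentPolynomial.C (T (s : ℤ × ℤ).1) * T (s : ℤ × ℤ).2 : LaurentPolynomial (LaurentPolynomial ℂ))) ^ n
      = ∑ w : Fin n → {s // s ∈ stepSet},
          ∏ i, (LaurentPolynomial.C (T ((w i : ℤ × ℤ)).1) * T ((w i : ℤ × ℤ)).2 :
            LaurentPolynomial (LaurentPolynomial ℂ)) :=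
    Fintype.sum_pow _ n
  rw [hpow, AddMonoidAlgebra.coeff_sum, Finsupp.finset_sum_apply, Sx, PowerSeries.coeff_mk]
  refine Finset.sum_congr rfl fun w _ => ?_
  rw [Finset.prod_mul_distrib, ← map_prod, T_prod, T_prod, ← single_eq_C_mul_T,
    AddMonoidAlgebra.coeff_single, Finsupp.single_apply]

theorem bilateral_walks_gf (Y : PowerSeries (LaurentPolynomial ℂ))
    (hY0 : PowerSeries.constantCoeff (R := LaurentPolynomial ℂ) Y = 0)
    (hY : Y = PowerSeries.X *
      (Y ^ 3 + PowerSeries.C (R := LaurentPolynomial ℂ)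
        (LaurentPolynomial.T 1 + LaurentPolynomial.T (-1)) * Y + 1)) :
    Sx * (1 - PowerSeries.X * PowerSeries.C (R := LaurentPolynomial ℂ)
        (LaurentPolynomial.T 1 + LaurentPolynomial.T (-1)) -
      3 * PowerSeries.X * Y ^ 2) = 1 := by
  classical
  -- the one-variable identity satisfied by `Y`
  have hS : Y * (1 - PowerSeries.X * PowerSeries.C (R := LaurentPolynomial ℂ) (T 1 + T (-1))
      - PowerSeries.X * Y ^ 2) = PowerSeries.X := by linear_combination hY
  -- move to the two-variable world
  set ι : PowerSeries (LaurentPolynomial ℂ) →+* PowerSeries (LaurentPolynomial (LaurentPolynomial ℂ)) :=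
    PowerSeries.map (C : LaurentPolynomial ℂ →+* LaurentPolynomial (LaurentPolynomial ℂ)) with hι
  set yY : PowerSeries (LaurentPolynomial (LaurentPolynomial ℂ)) := ι Y with hyY
  set cb : PowerSeries (LaurentPolynomial (LaurentPolynomial ℂ)) :=
    PowerSeries.C (C (T 1 + T (-1))) with hcb
  set u1 : PowerSeries (LaurentPolynomial (LaurentPolynomial ℂ)) := PowerSeries.C (T 1) with hu1
  set v1 : PowerSeries (LaurentPolynomial (LaurentPolynomial ℂ)) := PowerSeries.C (T (-1)) with hv1
  set w2 : PowerSeries (LaurentPolynomial (LaurentPolynomial ℂ)) := PowerSeries.C (T 2) with hw2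
  have hYE : yY * (1 - PowerSeries.X * cb - PowerSeries.X * yY ^ 2) = PowerSeries.X := by
    have := congrArg ι hS
    simpa only [map_mul, map_sub, map_one, map_pow, PowerSeries.map_X, PowerSeries.map_C,
      hι] using this
  have huv : u1 * v1 = 1 := by
    rw [hu1, hv1, ← map_mul, ← T_add]
    norm_num
  have hwv : w2 * v1 = u1 := by
    rw [hu1, hw2, hv1, ← map_mul, ← T_add]
    norm_num
  set E : PowerSeries (LaurentPolynomial (LaurentPolynomial ℂ)) :=
    1 - PowerSeries.X * cb - PowerSeries.X * yY ^ 2 with hE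
  set G : PowerSeries (LaurentPolynomial (LaurentPolynomial ℂ)) :=
    E - PowerSeries.X * yY * u1 - PowerSeries.X * w2 with hG
  set Z1 : PowerSeries (LaurentPolynomial (LaurentPolynomial ℂ)) := 1 - yY * v1 with hZ1
  set D : PowerSeries (LaurentPolynomial (LaurentPolynomial ℂ)) :=
    PowerSeries.X * (2 * yY * u1 + w2) with hD
  set f : LaurentPolynomial (LaurentPolynomial ℂ) := LaurentPolynomial.C (T 1 + T (-1)) + T 2 + T (-1) with hfdef
  set F : PowerSeries (LaurentPolynomial (LaurentPolynomial ℂ)) :=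
    PowerSeries.mk fun n => f ^ n with hF
  have hK : F * (1 - PowerSeries.X * PowerSeries.C f) = 1 := geom f
  have hCf : PowerSeries.C (R := LaurentPolynomial (LaurentPolynomial ℂ)) f = cb + w2 + v1 := by
    rw [hfdef, map_add, map_add, hcb, hw2, hv1]
  have hZG : Z1 * G = 1 - PowerSeries.X * PowerSeries.C f := by
    rw [hCf, hZ1, hG, hE]
    linear_combination (-v1) * hYE + (PowerSeries.X * yY ^ 2) * huv +
      (PowerSeries.X * yY) * hwv
  set B : PowerSeries (LaurentPolynomial ℂ) :=
    1 - PowerSeries.X * PowerSeries.C (R := LaurentPolynomial ℂ) (T 1 + T (-1))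
      - 3 * PowerSeries.X * Y ^ 2 with hB
  have hiB : ι B = G + D * Z1 := by
    have h0 : ι B = 1 - PowerSeries.X * cb - 3 * PowerSeries.X * yY ^ 2 := by
      simp only [hB, map_sub, map_one, map_mul, map_pow, map_ofNat, PowerSeries.map_X,
        PowerSeries.map_C, hι, hyY, hcb]
    rw [h0, hG, hD, hZ1, hE]
    linear_combination (2 * PowerSeries.X * yY ^ 2) * huv + (PowerSeries.X * yY) * hwv
  set W : PowerSeries (LaurentPolynomial (LaurentPolynomial ℂ)) := G * F with hW
  set V : PowerSeries (LaurentPolynomial (LaurentPolynomial ℂ)) := Z1 * F with hV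
  have hW1 : Z1 * W = 1 := by rw [hW]; linear_combination F * hZG + hK
  have hV1 : G * V = 1 := by rw [hV]; linear_combination F * hZG + hK
  -- recursion equations
  have hWrec : W = 1 + (yY * v1) * W := by rw [hZ1] at hW1; linear_combination hW1
  have hVrec : V = 1 + (PowerSeries.X * cb + PowerSeries.X * yY ^ 2 +
      PowerSeries.X * yY * u1 + PowerSeries.X * w2) * V := by
    rw [hG, hE] at hV1; linear_combination hV1
  -- support facts
  have hyYc : PowerSeries.constantCoeff yY = 0 := by
    rw [hyY, hι, ← PowerSeries.coeff_zero_eq_constantCoeff, PowerSeries.coeff_map,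
      PowerSeries.coeff_zero_eq_constantCoeff, hY0, map_zero]
  have hyY0 : PowerSeries.coeff 0 (yY * v1) = 0 := by
    rw [PowerSeries.coeff_zero_eq_constantCoeff, map_mul, hyYc, zero_mul]
  have hUByY : UB 0 yY := by rw [hyY, hι]; exact UB_iota Y
  have hUByYv1 : UB 0 (yY * v1) := by
    have := hUByY.mul ((UB_yp (-1)).mono (by norm_num : (-1:ℤ) ≤ 0))
    have h2 := this.mono (by norm_num : (0:ℤ) + 0 ≤ 0)
    rwa [← hv1] at h2
  have hUBW : UB 0 W := UB_rec hWrec hyY0 UB_one hUByYv1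
  have hctW : ct W = 1 := by
    rw [hWrec, ct_add, ct_one]
    have h1 : UB (-1) (yY * v1) := by
      have := hUByY.mul (UB_yp (-1))
      have h2 := this.mono (by norm_num : (0:ℤ) + -1 ≤ -1)
      rwa [← hv1] at h2
    have hUB : UB (-1) ((yY * v1) * W) := (h1.mul hUBW).mono (by norm_num)
    rw [ct_zero_of_UB _ hUB, add_zero]
  -- V support
  have hM0 : PowerSeries.coeff 0 (PowerSeries.X * cb + PowerSeries.X * yY ^ 2 +
      PowerSeries.X * yY * u1 + PowerSeries.X * w2) = 0 := by
    simp [PowerSeries.coeff_zero_eq_constantCoeff, map_add, map_mul]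
  have hLBX : LB 0 (PowerSeries.X : PowerSeries (LaurentPolynomial (LaurentPolynomial ℂ))) := by
    have := LB_iota (A := LaurentPolynomial ℂ) PowerSeries.X
    rwa [PowerSeries.map_X] at this
  have hLByY : LB 0 yY := by rw [hyY, hι]; exact LB_iota Y
  have hLBcb : LB 0 cb := by
    have := LB_iota (A := LaurentPolynomial ℂ)
      (PowerSeries.C (R := LaurentPolynomial ℂ) (T 1 + T (-1)))
    rwa [PowerSeries.map_C, ← hcb] at this
  have hLBM : LB 0 (PowerSeries.X * cb + PowerSeries.X * yY ^ 2 +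
      PowerSeries.X * yY * u1 + PowerSeries.X * w2) := by
    have h1 : LB 0 (PowerSeries.X * cb) := (hLBX.mul hLBcb).anti (by norm_num)
    have hy2 : LB 0 (yY ^ 2) := by
      rw [pow_two]; exact (hLByY.mul hLByY).anti (by norm_num)
    have h2 : LB 0 (PowerSeries.X * yY ^ 2) := (hLBX.mul hy2).anti (by norm_num)
    have h3 : LB 0 (PowerSeries.X * yY * u1) := by
      have := ((hLBX.mul hLByY).mul ((LB_yp 1))).anti (by norm_num : (0:ℤ) ≤ 0 + 0 + 1)
      rwa [← hu1] at this
    have h4 : LB 0 (PowerSeries.X * w2) := by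
      have := (hLBX.mul (LB_yp 2)).anti (by norm_num : (0:ℤ) ≤ 0 + 2)
      rwa [← hw2] at this
    exact ((h1.add h2).add h3).add h4
  have hLBV : LB 0 V := LB_rec hVrec hM0 LB_one hLBM
  have hctDV : ct (D * V) = 0 := by
    have h2y : LB 0 (2 * yY) := by rw [two_mul]; exact hLByY.add hLByY
    have ha : LB 1 (2 * yY * u1) := by
      have := (h2y.mul (LB_yp 1)).anti (by norm_num : (1:ℤ) ≤ 0 + 1)
      rwa [← hu1] at this
    have hb : LB 1 w2 := by
      have := (LB_yp (A := LaurentPolynomial ℂ) 2).anti (by norm_num : (1:ℤ) ≤ 2)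
      rwa [← hw2] at this
    have hD1 : LB 1 D := by
      rw [hD]
      exact (hLBX.mul (ha.add hb)).anti (by norm_num : (1:ℤ) ≤ 0 + 1)
    exact ct_zero_of_LB _ ((hD1.mul hLBV).anti (by norm_num : (1:ℤ) ≤ 1 + 0))
  -- assemble
  have hSxct : Sx = ct F := by
    ext n
    rw [coeff_Sx n]
    simp only [ct, PowerSeries.coeff_mk, hF, hfdef]
  have hfinal : ι B * F = W + D * V := by rw [hiB, hW, hV]; ring
  calc Sx * B = B * ct F := by rw [hSxct, mul_comm]
    _ = ct (ι B * F) := by rw [hι, ct_iota_mul]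
    _ = ct (W + D * V) := by rw [hfinal]
    _ = 1 := by rw [ct_add, hctW, hctDV, add_zero]
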